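/- For any two probability measures P and Q on the same measurable space, the Jensen–Shannon divergence dominates half the squared total variation distance: D_JS(P ‖ Q) ≥ (1/2) · D_TV(P, Q)². -/

import Mathlib

open MeasureTheory

noncomputable section

/-- Total variation distance between two measures. -/
def tvDist {α : Type*} [MeasurableSpace α] (P Q : Measure α) : ℝ :=
  ⨆ A : {A : Set α // MeasurableSet A}, |(P A.1).toReal - (Q A.1).toReal|

/-- Kullback–Leibler divergence `D_KL(P‖Q) = ∫ log(dP/dQ) dP`
(for `P ≪ Q`, via the Radon–Nikodym derivative). -/
def klDiv {α : Type*} [MeasurableSpace α] (P Q : Measure α) : ℝ :=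
  ∫ x, Real.log ((P.rnDeriv Q x).toReal) ∂P

/-- Jensen–Shannon divergence
`D_JS(P‖Q) = (1/2)[D_KL(P‖M) + D_KL(Q‖M)]` with `M = (P+Q)/2`. -/
def jsDiv {α : Type*} [MeasurableSpace α] (P Q : Measure α) : ℝ :=
  klDiv P ((2 : ENNReal)⁻¹ • (P + Q)) / 2 + klDiv Q ((2 : ENNReal)⁻¹ • (P + Q)) / 2

lemma aux_mono1 : MonotoneOn (fun t : ℝ => Real.log (1 + t) - Real.log (1 - t) - 2 * t)
    (Set.Ico (0:ℝ) 1) := by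
  have hd : ∀ x ∈ Set.Ico (0:ℝ) 1, HasDerivAt
      (fun t : ℝ => Real.log (1 + t) - Real.log (1 - t) - 2 * t)
      (1 / (1 + x) - (-1) / (1 - x) - 2) x := by
    intro x hx
    have hx1 : (0:ℝ) < 1 + x := by linarith [hx.1]
    have hx2 : (0:ℝ) < 1 - x := by linarith [hx.2]
    have h1 : HasDerivAt (fun t : ℝ => 1 + t) 1 x := (hasDerivAt_id x).const_add 1
    have h2 : HasDerivAt (fun t : ℝ => 1 - t) (-1) x := (hasDerivAt_id x).const_sub 1
    have hl1 : HasDerivAt (fun t : ℝ => Real.log (1 + t)) (1 / (1 + x)) x :=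
      h1.log hx1.ne'
    have hl2 : HasDerivAt (fun t : ℝ => Real.log (1 - t)) ((-1) / (1 - x)) x :=
      h2.log hx2.ne'
    have h3 : HasDerivAt (fun t : ℝ => 2 * t) 2 x := by
      simpa using (hasDerivAt_id x).const_mul (2:ℝ)
    exact (hl1.sub hl2).sub h3
  apply monotoneOn_of_deriv_nonneg (convex_Ico 0 1)
  · exact fun x hx => (hd x hx).continuousAt.continuousWithinAt
  · intro x hx
    rw [interior_Ico] at hx
    exact ((hd x (Set.Ioo_subset_Ico_self hx)).differentiableAt).differentiableWithinAt
  · intro x hx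
    rw [interior_Ico] at hx
    rw [(hd x (Set.Ioo_subset_Ico_self hx)).deriv]
    have hx1 : (0:ℝ) < 1 + x := by linarith [hx.1]
    have hx2 : (0:ℝ) < 1 - x := by linarith [hx.2]
    have : 1 / (1 + x) - (-1) / (1 - x) - 2 = 2 * x ^ 2 / ((1 + x) * (1 - x)) := by
      field_simp; ring
    rw [this]; positivity

lemma aux_mono2 : MonotoneOn
    (fun t : ℝ => (1 + t) * Real.log (1 + t) + (1 - t) * Real.log (1 - t) - t ^ 2)
    (Set.Ico (0:ℝ) 1) := by
  have hd : ∀ x ∈ Set.Ico (0:ℝ) 1, HasDerivAt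
      (fun t : ℝ => (1 + t) * Real.log (1 + t) + (1 - t) * Real.log (1 - t) - t ^ 2)
      (Real.log (1 + x) - Real.log (1 - x) - 2 * x) x := by
    intro x hx
    have hx1 : (0:ℝ) < 1 + x := by linarith [hx.1]
    have hx2 : (0:ℝ) < 1 - x := by linarith [hx.2]
    have h1 : HasDerivAt (fun t : ℝ => 1 + t) 1 x := (hasDerivAt_id x).const_add 1
    have h2 : HasDerivAt (fun t : ℝ => 1 - t) (-1) x := (hasDerivAt_id x).const_sub 1
    have hl1 : HasDerivAt (fun t : ℝ => Real.log (1 + t)) (1 / (1 + x)) x := h1.log hx1.ne'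
    have hl2 : HasDerivAt (fun t : ℝ => Real.log (1 - t)) ((-1) / (1 - x)) x := h2.log hx2.ne'
    have hm1 := h1.mul hl1
    have hm2 := h2.mul hl2
    have hp : HasDerivAt (fun t : ℝ => t ^ 2) (2 * x) x := by
      simpa using hasDerivAt_pow 2 x
    convert (hm1.add hm2).sub hp using 1
    · rfl
    · rfl
    · rfl
    · field_simp
      ring
  apply monotoneOn_of_deriv_nonneg (convex_Ico 0 1)
  · exact fun x hx => (hd x hx).continuousAt.continuousWithinAt
  · intro x hx
    rw [interior_Ico] at hx
    exact ((hd x (Set.Ioo_subset_Ico_self hx)).differentiableAt).differentiableWithinAt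
  · intro x hx
    rw [interior_Ico] at hx
    rw [(hd x (Set.Ioo_subset_Ico_self hx)).deriv]
    have h0 := aux_mono1 (Set.mem_Ico.mpr ⟨le_refl 0, one_pos⟩)
        (Set.mem_Ico.mpr ⟨hx.1.le, hx.2⟩) hx.1.le
    simpa using h0

lemma aux_pointwise {t : ℝ} (h0 : 0 ≤ t) (h1 : t ≤ 1) :
    t ^ 2 ≤ (1 + t) * Real.log (1 + t) + (1 - t) * Real.log (1 - t) := by
  rcases eq_or_lt_of_le h1 with rfl | h1
  · norm_num
    nlinarith [Real.log_two_gt_d9]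
  · have h := aux_mono2 (Set.mem_Ico.mpr ⟨le_refl 0, one_pos⟩)
        (Set.mem_Ico.mpr ⟨h0, h1⟩) h0
    norm_num at h
    nlinarith [h]

lemma aux_pointwise' {a : ℝ} (h0 : 0 ≤ a) (h2 : a ≤ 2) :
    (a - 1) ^ 2 ≤ a * Real.log a + (2 - a) * Real.log (2 - a) := by
  rcases le_total 1 a with h | h
  · have := aux_pointwise (t := a - 1) (by linarith) (by linarith)
    have e1 : 1 + (a - 1) = a := by ring
    have e2 : 1 - (a - 1) = 2 - a := by ring
    rw [e1, e2] at this
    nlinarith [this]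
  · have := aux_pointwise (t := 1 - a) (by linarith) (by linarith)
    have e1 : 1 + (1 - a) = 2 - a := by ring
    have e2 : 1 - (1 - a) = a := by ring
    rw [e1, e2] at this
    nlinarith [this]

lemma abs_mul_log_le {a : ℝ} (h0 : 0 ≤ a) (h2 : a ≤ 2) : |a * Real.log a| ≤ 2 := by
  rcases eq_or_lt_of_le h0 with rfl | ha
  · simp
  rcases le_total a 1 with h | h
  · have hlog : Real.log a ≤ 0 := Real.log_nonpos h0 h
    have hinv : Real.log a⁻¹ ≤ a⁻¹ - 1 := Real.log_le_sub_one_of_pos (by positivity)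
    rw [Real.log_inv] at hinv
    have : a * (-Real.log a) ≤ a * (a⁻¹ - 1) := by
      apply mul_le_mul_of_nonneg_left _ h0
      linarith
    have ha' : a * (a⁻¹ - 1) = 1 - a := by field_simp
    rw [abs_of_nonpos (mul_nonpos_of_nonneg_of_nonpos h0 hlog)]
    nlinarith
  · have hlog : 0 ≤ Real.log a := Real.log_nonneg h
    have : Real.log a ≤ a - 1 := Real.log_le_sub_one_of_pos (by linarith)
    rw [abs_of_nonneg (mul_nonneg h0 hlog)]
    nlinarith

/-- For any two probability measures `P, Q` on the same measurable space,
`D_JS(P ‖ Q) ≥ (1/2) · D_TV(P, Q)²`. -/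
theorem half_sq_tvDist_le_jsDiv {α : Type*} [MeasurableSpace α]
    (P Q : Measure α) [IsProbabilityMeasure P] [IsProbabilityMeasure Q] :
    (1 / 2) * tvDist P Q ^ 2 ≤ jsDiv P Q := by
  set M : Measure α := (2 : ENNReal)⁻¹ • (P + Q) with hM
  have hMuniv : M Set.univ = 1 := by
    rw [hM]
    simp only [Measure.smul_apply, Measure.add_apply, measure_univ, smul_eq_mul]
    rw [show (1:ENNReal) + 1 = 2 by norm_num]
    exact ENNReal.inv_mul_cancel (by norm_num) (by norm_num)
  haveI hMprob : IsProbabilityMeasure M := ⟨hMuniv⟩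
  have hPM : P ≪ M := by
    refine Measure.AbsolutelyContinuous.mk fun A hA h0 => ?_
    rw [hM, Measure.smul_apply, Measure.add_apply, smul_eq_mul] at h0
    rcases mul_eq_zero.mp h0 with h | h
    · exact absurd h (by norm_num)
    · exact (add_eq_zero.mp h).1
  have hQM : Q ≪ M := by
    refine Measure.AbsolutelyContinuous.mk fun A hA h0 => ?_
    rw [hM, Measure.smul_apply, Measure.add_apply, smul_eq_mul] at h0
    rcases mul_eq_zero.mp h0 with h | h
    · exact absurd h (by norm_num)
    · exact (add_eq_zero.mp h).2
  have hPQ2M : P + Q = (2 : ENNReal) • M := by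
    rw [hM, smul_smul, ENNReal.mul_inv_cancel (by norm_num) (by norm_num), one_smul]
  set F : α → ℝ := fun x => (P.rnDeriv M x).toReal with hF
  set G : α → ℝ := fun x => (Q.rnDeriv M x).toReal with hG
  have hF_meas : Measurable F := (Measure.measurable_rnDeriv P M).ennreal_toReal
  have hG_meas : Measurable G := (Measure.measurable_rnDeriv Q M).ennreal_toReal
  have hF0 : ∀ x, 0 ≤ F x := fun x => ENNReal.toReal_nonneg
  have hG0 : ∀ x, 0 ≤ G x := fun x => ENNReal.toReal_nonneg
  -- a.e. facts
  have hsum : ∀ᵐ x ∂M, P.rnDeriv M x + Q.rnDeriv M x = 2 := by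
    have e1 := Measure.rnDeriv_add' P Q M
    have e2 := Measure.rnDeriv_smul_left_of_ne_top' M M (r := (2 : ENNReal)) (by norm_num)
    have e3 := Measure.rnDeriv_self M
    rw [hPQ2M] at e1
    filter_upwards [e1, e2, e3] with x h1 h2 h3
    have : P.rnDeriv M x + Q.rnDeriv M x = ((2 : ENNReal) • M).rnDeriv M x := by
      rw [h1]; simp
    rw [this, h2]
    simp [h3]
  have hFG : ∀ᵐ x ∂M, F x + G x = 2 ∧ F x ≤ 2 ∧ G x ≤ 2 := by
    filter_upwards [hsum] with x hx
    have ha : P.rnDeriv M x ≤ 2 := by rw [← hx]; exact self_le_add_right _ _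
    have hb : Q.rnDeriv M x ≤ 2 := by rw [← hx]; exact self_le_add_left _ _
    have ha' : P.rnDeriv M x ≠ ⊤ := ne_top_of_le_ne_top (by norm_num) ha
    have hb' : Q.rnDeriv M x ≠ ⊤ := ne_top_of_le_ne_top (by norm_num) hb
    refine ⟨?_, ?_, ?_⟩
    · rw [hF, hG]
      rw [← ENNReal.toReal_add ha' hb', hx]
      norm_num
    · calc F x ≤ (2 : ENNReal).toReal := ENNReal.toReal_mono (by norm_num) ha
        _ = 2 := by norm_num
    · calc G x ≤ (2 : ENNReal).toReal := ENNReal.toReal_mono (by norm_num) hb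
        _ = 2 := by norm_num
  -- integrability
  have hint : ∀ (f : α → ℝ) (C : ℝ), Measurable f → (∀ᵐ x ∂M, |f x| ≤ C) → Integrable f M :=
    fun f C hm hb => Integrable.mono' (integrable_const C) hm.aestronglyMeasurable
      (by simpa [Real.norm_eq_abs] using hb)
  have intF : Integrable F M := hint F 2 hF_meas (by
    filter_upwards [hFG] with x hx
    rw [abs_of_nonneg (hF0 x)]; exact hx.2.1)
  have intAbs : Integrable (fun x => |F x - 1|) M :=
    hint _ 1 (hF_meas.sub measurable_const).abs (by
      filter_upwards [hFG] with x hx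
      rw [abs_abs]
      rw [abs_le]; constructor <;> [linarith [hF0 x]; linarith [hx.2.1]])
  have intSq : Integrable (fun x => (F x - 1) ^ 2) M :=
    hint _ 1 ((hF_meas.sub measurable_const).pow measurable_const) (by
      filter_upwards [hFG] with x hx
      rw [abs_of_nonneg (sq_nonneg _)]
      nlinarith [hF0 x, hx.2.1])
  have intFlog : Integrable (fun x => F x * Real.log (F x)) M :=
    hint _ 2 (hF_meas.mul (Real.measurable_log.comp hF_meas)) (by
      filter_upwards [hFG] with x hx
      exact abs_mul_log_le (hF0 x) hx.2.1)
  have intGlog : Integrable (fun x => G x * Real.log (G x)) M :=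
    hint _ 2 (hG_meas.mul (Real.measurable_log.comp hG_meas)) (by
      filter_upwards [hFG] with x hx
      exact abs_mul_log_le (hG0 x) hx.2.2)
  -- klDiv rewriting
  have hklP : klDiv P M = ∫ x, F x * Real.log (F x) ∂M := by
    rw [klDiv, ← integral_rnDeriv_smul hPM (f := fun x => Real.log (F x))]
    simp [smul_eq_mul, hF]
  have hklQ : klDiv Q M = ∫ x, G x * Real.log (G x) ∂M := by
    rw [klDiv, ← integral_rnDeriv_smul hQM (f := fun x => Real.log (G x))]
    simp [smul_eq_mul, hG]
  have hjs : jsDiv P Q = (∫ x, F x * Real.log (F x) ∂M) / 2 + (∫ x, G x * Real.log (G x) ∂M) / 2 := by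
    rw [jsDiv, ← hM, hklP, hklQ]
  -- ∫ F = 1
  have hintF1 : ∫ x, F x ∂M = 1 := by
    rw [hF]
    rw [Measure.integral_toReal_rnDeriv hPM]
    simp
  have hIuniv : ∫ x, (F x - 1) ∂M = 0 := by
    rw [integral_sub intF (integrable_const 1), hintF1]
    simp
  -- per-set bound
  have hA_bound : ∀ A : {A : Set α // MeasurableSet A},
      |(P A.1).toReal - (Q A.1).toReal| ≤ ∫ x, |F x - 1| ∂M := by
    rintro ⟨A, hA⟩
    have hPA : (P A).toReal = ∫ x in A, F x ∂M := (Measure.setIntegral_toReal_rnDeriv hPM A).symm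
    have hQA : (Q A).toReal = ∫ x in A, G x ∂M := (Measure.setIntegral_toReal_rnDeriv hQM A).symm
    have hGae : G =ᵐ[M] fun x => 2 - F x := by
      filter_upwards [hFG] with x hx; linarith [hx.1]
    have h2 : ∫ x in A, G x ∂M = ∫ x in A, (2 - F x) ∂M :=
      integral_congr_ae (ae_restrict_of_ae hGae)
    have intsub : Integrable (fun x => F x - 1) M := intF.sub (integrable_const 1)
    have h3 : (P A).toReal - (Q A).toReal = 2 * ∫ x in A, (F x - 1) ∂M := by
      have e1 : ∫ x in A, (2 - F x) ∂M = (∫ x in A, (2:ℝ) ∂M) - ∫ x in A, F x ∂M :=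
        integral_sub (integrable_const 2).restrict intF.restrict
      have e2 : ∫ x in A, (F x - 1) ∂M = (∫ x in A, F x ∂M) - ∫ x in A, (1:ℝ) ∂M :=
        integral_sub intF.restrict (integrable_const 1).restrict
      have e3 : ∫ x in A, (2:ℝ) ∂M = 2 * ∫ x in A, (1:ℝ) ∂M := by
        simp [integral_const]; ring
      rw [hPA, hQA, h2, e1, e2, e3]; ring
    have hcompl : ∫ x in Aᶜ, (F x - 1) ∂M = - ∫ x in A, (F x - 1) ∂M := by
      have := integral_add_compl hA intsub
      rw [hIuniv] at this
      linarith
    have habs1 : |∫ x in A, (F x - 1) ∂M| ≤ ∫ x in A, |F x - 1| ∂M := by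
      simpa [Real.norm_eq_abs] using norm_integral_le_integral_norm (μ := M.restrict A) (fun x => F x - 1)
    have habs2 : |∫ x in Aᶜ, (F x - 1) ∂M| ≤ ∫ x in Aᶜ, |F x - 1| ∂M := by
      simpa [Real.norm_eq_abs] using norm_integral_le_integral_norm (μ := M.restrict Aᶜ) (fun x => F x - 1)
    have hsplit : (∫ x in A, |F x - 1| ∂M) + ∫ x in Aᶜ, |F x - 1| ∂M = ∫ x, |F x - 1| ∂M :=
      integral_add_compl hA intAbs
    rw [h3, abs_mul, abs_two]
    calc 2 * |∫ x in A, (F x - 1) ∂M|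
        = |∫ x in A, (F x - 1) ∂M| + |∫ x in Aᶜ, (F x - 1) ∂M| := by
          rw [hcompl, abs_neg]; ring
      _ ≤ (∫ x in A, |F x - 1| ∂M) + ∫ x in Aᶜ, |F x - 1| ∂M := add_le_add habs1 habs2
      _ = ∫ x, |F x - 1| ∂M := hsplit
  -- tvDist bounds
  have hbdd : BddAbove (Set.range fun A : {A : Set α // MeasurableSet A} =>
      |(P A.1).toReal - (Q A.1).toReal|) := by
    refine ⟨∫ x, |F x - 1| ∂M, ?_⟩
    rintro y ⟨A, rfl⟩
    exact hA_bound A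
  have hTV : tvDist P Q ≤ ∫ x, |F x - 1| ∂M := ciSup_le hA_bound
  have hTV0 : 0 ≤ tvDist P Q := by
    have h := le_ciSup hbdd (⟨∅, MeasurableSet.empty⟩ : {A : Set α // MeasurableSet A})
    simpa [tvDist] using h
  -- Cauchy-Schwarz via variance
  have habs_bound : ∀ᵐ x ∂M, ‖|F x - 1|‖ ≤ 1 := by
    filter_upwards [hFG] with x hx
    rw [Real.norm_eq_abs, abs_abs, abs_le]
    constructor <;> [linarith [hF0 x]; linarith [hx.2.1]]
  have hmem : MemLp (fun x => |F x - 1|) 2 M :=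
    (memLp_top_of_bound (hF_meas.sub measurable_const).abs.aestronglyMeasurable 1
      habs_bound).mono_exponent le_top
  have hCS : (∫ x, |F x - 1| ∂M) ^ 2 ≤ ∫ x, (F x - 1) ^ 2 ∂M := by
    have h := ProbabilityTheory.variance_nonneg (fun x => |F x - 1|) M
    rw [ProbabilityTheory.variance_eq_sub hmem] at h
    simp only [Pi.pow_apply, sq_abs] at h
    linarith
  -- pointwise inequality
  have hMono : ∫ x, (F x - 1) ^ 2 ∂M ≤ ∫ x, (F x * Real.log (F x) + G x * Real.log (G x)) ∂M := by
    refine integral_mono_ae intSq (intFlog.add intGlog) ?_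
    filter_upwards [hFG] with x hx
    have hGx : G x = 2 - F x := by linarith [hx.1]
    have := aux_pointwise' (a := F x) (hF0 x) hx.2.1
    rw [hGx]
    simpa using this
  have hsum_int : ∫ x, (F x * Real.log (F x) + G x * Real.log (G x)) ∂M
      = (∫ x, F x * Real.log (F x) ∂M) + ∫ x, G x * Real.log (G x) ∂M :=
    integral_add intFlog intGlog
  have h1 : tvDist P Q ^ 2 ≤ (∫ x, |F x - 1| ∂M) ^ 2 := pow_le_pow_left₀ hTV0 hTV 2
  rw [hjs]
  rw [hsum_int] at hMono
  nlinarith [h1, hCS, hMono]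


end
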